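/- Let λ be a nonempty partition of n. (i) For X ∈ {B,C,D}, if the X-collapse λ_X is defined, then #(λ_X) equals #λ or #λ + 1. (ii) If n is odd, then every partition in 𝒫_B(n) has an odd number of parts; if n is even, then every partition in 𝒫_D(n) has an even number of parts. (iii) If n is even, then the C-collapse λ_C has exactly #λ parts. -/

import Mathlib

namespace NilDual

/-- A "partition" is encoded as a multiset of natural numbers (its parts). -/
abbrev Ptn := Multiset ℕ

/-- All parts are positive. -/
def IsPartition (l : Ptn) : Prop := ∀ a ∈ l, 0 < a

/-- `height l a` is the number of parts of `l` that are ≥ `a`. -/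
def height (l : Ptn) (a : ℕ) : ℕ := Multiset.card (l.filter (fun p => a ≤ p))

/-- `psum l j` is the sum of the `j` largest parts of `l`. -/
def psum (l : Ptn) (j : ℕ) : ℕ := ∑ a ∈ Finset.Icc 1 l.sum, min j (height l a)

/-- `Dom l m` means `l ≤ m` in the dominance order. -/
def Dom (l m : Ptn) : Prop := ∀ j : ℕ, psum l j ≤ psum m j

/-- The transpose (conjugate) partition. -/
def transpose (l : Ptn) : Ptn :=
  Multiset.filter (fun x => 0 < x)
    (Multiset.map (fun a => height l a) (Finset.Icc 1 l.sum).val)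

/-- The largest part (0 for the empty partition). -/
def maxPart (l : Ptn) : ℕ := l.sup

/-- The smallest part (0 for the empty partition). -/
noncomputable def minPart (l : Ptn) : ℕ := sInf {a : ℕ | a ∈ l}

/-- `λ⁺`: add 1 to the largest part. -/
def up (l : Ptn) : Ptn := (maxPart l + 1) ::ₘ l.erase (maxPart l)

/-- `λ⁻`: subtract 1 from the smallest part, deleting it if it becomes 0. -/
noncomputable def down (l : Ptn) : Ptn :=
  if minPart l ≤ 1 then l.erase (minPart l)
  else (minPart l - 1) ::ₘ l.erase (minPart l)

/-- The join `λ ∨ μ = (λ* ∪ μ*)*`. -/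
def pjoin (l m : Ptn) : Ptn := transpose (transpose l + transpose m)

/-- `λ₋ = (λ*⁻)*`. -/
noncomputable def lowerStar (l : Ptn) : Ptn := transpose (down (transpose l))

inductive PType | B | C | D
deriving DecidableEq

/-- Parts of this parity must occur with even multiplicity in a partition of type `X`. -/
def badPart : PType → ℕ → Prop
  | PType.B, a => Even a
  | PType.C, a => Odd a
  | PType.D, a => Even a

/-- Membership in `𝒫_X` (sum unconstrained). -/
def InP (X : PType) (l : Ptn) : Prop :=
  IsPartition l ∧ ∀ a : ℕ, badPart X a → Even (l.count a)

/-- The parity of `n` required for `𝒫_X(n)` to be defined. -/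
def sumParity : PType → ℕ → Prop
  | PType.B, n => Odd n
  | PType.C, n => Even n
  | PType.D, n => Even n

/-- `m` is the X-collapse of `l`: `m ∈ 𝒫_X(|l|)`, `m ≤ l` in dominance order, and `m`
dominates every member of `𝒫_X(|l|)` that is dominated by `l`. -/
def IsCollapse (X : PType) (l m : Ptn) : Prop :=
  InP X m ∧ m.sum = l.sum ∧ Dom m l ∧
    ∀ ν : Ptn, InP X ν → ν.sum = l.sum → Dom ν l → Dom ν m

def CollapseDefined (X : PType) (l : Ptn) : Prop := ∃ m, IsCollapse X l m

open Classical in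
/-- The X-collapse `λ_X` (junk value `0` if it does not exist). -/
noncomputable def collapse (X : PType) (l : Ptn) : Ptn :=
  if h : CollapseDefined X l then h.choose else 0

/-- `l` is superior to `m`: smallest part of `l` ≥ largest part of `m`. -/
def Superior (l m : Ptn) : Prop := maxPart m ≤ minPart l

def EvenlySuperior (l m : Ptn) : Prop := ∃ k : ℕ, Even k ∧ maxPart m ≤ k ∧ k ≤ minPart l

def OddlySuperior (l m : Ptn) : Prop := ∃ k : ℕ, Odd k ∧ maxPart m ≤ k ∧ k ≤ minPart l

/-- The parity required of marked parts in type `X`. -/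
def markParity : PType → ℕ → Prop
  | PType.C, a => Even a
  | _, a => Odd a

/-- `(ν, η)` is a marked partition of type `X`, with underlying partition `λ = ν + η`. -/
def IsMarked (X : PType) (nu eta : Ptn) : Prop :=
  InP X (nu + eta) ∧ sumParity X (nu + eta).sum ∧
  (∀ a ∈ nu, nu.count a = 1 ∧ markParity X a) ∧
  ((X = PType.B ∨ X = PType.D) → Even (Multiset.card nu))

/-- The Sommers duality map `d_S` on marked partitions `(ν, η)`. -/
noncomputable def dS (X : PType) (nu eta : Ptn) : Ptn :=
  match X with
  | PType.B => collapse PType.C (transpose (nu + collapse PType.C (down eta)))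
  | PType.C => collapse PType.B (transpose (nu + collapse PType.B (up eta)))
  | PType.D =>
      collapse PType.D (transpose (nu + transpose (collapse PType.D (transpose eta))))

/-- `a` is a markable part of `l` in type `X`. -/
def Markable (X : PType) (l : Ptn) (a : ℕ) : Prop :=
  a ∈ l ∧ markParity X a ∧
    (match X with
     | PType.B => Odd (height l a)
     | PType.C => Even (height l a)
     | PType.D => Even (height l a))

/-- The marked partition `⟨l, ν⟩` is reduced. -/
def Reduced (X : PType) (l nu : Ptn) : Prop := ∀ a ∈ nu, Markable X l a

/-- The parts entering the definition of a special marked partition: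
even of odd height (B), odd of even height (C), even of even height (D). -/
def AntiPart (X : PType) (l : Ptn) (a : ℕ) : Prop :=
  match X with
  | PType.B => Even a ∧ Odd (height l a)
  | PType.C => Odd a ∧ Even (height l a)
  | PType.D => Even a ∧ Even (height l a)

/-- The reduced marked partition `⟨l, ν⟩` is special. -/
def SpecialMP (X : PType) (l nu : Ptn) : Prop :=
  ∀ a ∈ l, AntiPart X l a → Even (height nu a)

/-- `a` is the largest part of `l` whose height satisfies `P`. -/
def LargestWith (l : Ptn) (P : ℕ → Prop) (a : ℕ) : Prop :=
  a ∈ l ∧ P (height l a) ∧ ∀ b ∈ l, P (height l b) → b ≤ a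

/-- Height parity for the top marked part in a basic block. -/
def heightParity : PType → ℕ → Prop
  | PType.B => fun n => Odd n
  | _ => fun n => Even n

/-- A basic block of type `X`. -/
def BasicBlock (X : PType) (nu eta : Ptn) : Prop :=
  IsMarked X nu eta ∧
  ((∃ n1 n2 : ℕ, n1 < n2 ∧ nu = {n2, n1} ∧ n1 = minPart (nu + eta) ∧
      LargestWith (nu + eta) (heightParity X) n2) ∨
   (X = PType.C ∧ ∃ n2 : ℕ, nu = {n2} ∧ LargestWith (nu + eta) (heightParity X) n2))

/-- An ultrabasic block: a basic block with `n₁ ≤ 1`. -/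
def Ultrabasic (X : PType) (nu eta : Ptn) : Prop :=
  BasicBlock X nu eta ∧ (Multiset.card nu = 2 → minPart nu ≤ 1)



/-! ### Auxiliary development -/

section Aux

open Multiset

/-- `gg l j` is the `(j+1)`-st largest part of `l`. -/
def gg (l : Ptn) (j : ℕ) : ℕ :=
  ((Finset.Icc 1 l.sum).filter (fun a => j < height l a)).card

lemma height_anti (l : Ptn) {a b : ℕ} (h : a ≤ b) : height l b ≤ height l a := by
  unfold height
  exact Multiset.card_le_card (Multiset.monotone_filter_right l (fun p hp => le_trans h hp))

lemma mem_le_sum {l : Ptn} {p : ℕ} (hp : p ∈ l) : p ≤ l.sum :=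
  Multiset.single_le_sum (fun x _ => Nat.zero_le x) p hp

lemma height_zero (l : Ptn) : height l 0 = Multiset.card l := by
  unfold height
  rw [Multiset.filter_eq_self.2 (fun a _ => Nat.zero_le a)]

lemma height_one {l : Ptn} (hl : IsPartition l) : height l 1 = Multiset.card l := by
  unfold height
  congr 1
  exact Multiset.filter_eq_self.2 (fun a ha => hl a ha)

lemma height_le_card (l : Ptn) (a : ℕ) : height l a ≤ Multiset.card l :=
  Multiset.card_le_card (Multiset.filter_le _ l)

lemma height_pos_of_mem {l : Ptn} {a : ℕ} (ha : a ∈ l) : 0 < height l a := by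
  unfold height
  rw [Multiset.card_pos_iff_exists_mem]
  exact ⟨a, Multiset.mem_filter.2 ⟨ha, le_refl a⟩⟩

lemma height_eq_zero {l : Ptn} {a : ℕ} (h : l.sum < a) : height l a = 0 := by
  unfold height
  rw [Multiset.card_eq_zero, Multiset.filter_eq_nil]
  intro p hp hap
  exact absurd (le_trans hap (mem_le_sum hp)) (by omega)

lemma height_cons (l : Ptn) (b a : ℕ) :
    height (b ::ₘ l) a = height l a + (if a ≤ b then 1 else 0) := by
  unfold height
  rw [Multiset.filter_cons]
  split_ifs with h <;> simp [h]

lemma height_succ_add_count (l : Ptn) (a : ℕ) :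
    height l a = height l (a + 1) + Multiset.count a l := by
  induction l using Multiset.induction_on with
  | empty => simp [height]
  | cons b s ih =>
    rw [height_cons, height_cons, Multiset.count_cons, ih]
    split_ifs <;> omega

lemma sum_heights_aux (l : Ptn) : ∀ M : ℕ, (∀ p ∈ l, p ≤ M) →
    ∑ a ∈ Finset.Icc 1 M, height l a = l.sum := by
  induction l using Multiset.induction_on with
  | empty => intro M _; simp [height]
  | cons b s ih =>
    intro M hM
    have hbM : b ≤ M := hM b (Multiset.mem_cons_self b s)
    have : ∀ a ∈ Finset.Icc 1 M, height (b ::ₘ s) a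
        = height s a + (if a ≤ b then 1 else 0) := fun a _ => height_cons s b a
    rw [Finset.sum_congr rfl this, Finset.sum_add_distrib,
      ih M (fun p hp => hM p (Multiset.mem_cons_of_mem hp)), Finset.sum_boole]
    have : (Finset.filter (fun a => a ≤ b) (Finset.Icc 1 M)) = Finset.Icc 1 b := by
      ext x; simp only [Finset.mem_filter, Finset.mem_Icc]; omega
    rw [this]
    simp [Multiset.sum_cons]
    omega

lemma sum_heights (l : Ptn) : ∑ a ∈ Finset.Icc 1 l.sum, height l a = l.sum :=
  sum_heights_aux l l.sum (fun _ hp => mem_le_sum hp)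

lemma psum_zero (l : Ptn) : psum l 0 = 0 := by simp [psum]

lemma psum_succ (l : Ptn) (j : ℕ) : psum l (j + 1) = psum l j + gg l j := by
  unfold psum gg
  have : ∀ a ∈ Finset.Icc 1 l.sum, min (j+1) (height l a)
      = min j (height l a) + (if j < height l a then 1 else 0) := by
    intro a _
    simp only [Nat.min_def]
    split_ifs <;> omega
  rw [Finset.sum_congr rfl this, Finset.sum_add_distrib, Finset.sum_boole]
  simp

lemma gg_anti (l : Ptn) {j j' : ℕ} (h : j ≤ j') : gg l j' ≤ gg l j := by
  unfold gg
  apply Finset.card_le_card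
  intro x hx
  rcases Finset.mem_filter.1 hx with ⟨h1, h2⟩
  exact Finset.mem_filter.2 ⟨h1, by omega⟩

lemma psum_eq_sum_range (l : Ptn) (j : ℕ) : psum l j = ∑ t ∈ Finset.range j, gg l t := by
  induction j with
  | zero => simp [psum_zero]
  | succ j ih => rw [psum_succ, ih, Finset.sum_range_succ]

lemma psum_mono (l : Ptn) {j j' : ℕ} (h : j ≤ j') : psum l j ≤ psum l j' := by
  rw [psum_eq_sum_range, psum_eq_sum_range]
  exact Finset.sum_le_sum_of_subset (Finset.range_subset_range.2 h)

lemma G3 {l : Ptn} (hl : IsPartition l) {a : ℕ} (ha : 1 ≤ a) (j : ℕ) :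
    a ≤ gg l j ↔ j < height l a := by
  constructor
  · intro h
    by_contra hc
    push_neg at hc
    have : ((Finset.Icc 1 l.sum).filter (fun x => j < height l x)) ⊆ Finset.Icc 1 (a-1) := by
      intro x hx
      rcases Finset.mem_filter.1 hx with ⟨hx1, hx2⟩
      rcases Finset.mem_Icc.1 hx1 with ⟨hx3, _⟩
      have : x < a := by
        by_contra hxa
        push_neg at hxa
        exact absurd (lt_of_lt_of_le hx2 (height_anti l hxa)) (by omega)
      exact Finset.mem_Icc.2 ⟨hx3, by omega⟩
    have := Finset.card_le_card this
    rw [Nat.card_Icc] at this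
    unfold gg at h
    omega
  · intro h
    have hpos : 0 < height l a := by omega
    have hax : a ≤ l.sum := by
      unfold height at hpos
      rw [Multiset.card_pos_iff_exists_mem] at hpos
      obtain ⟨p, hp⟩ := hpos
      rcases Multiset.mem_filter.1 hp with ⟨hp1, hp2⟩
      exact le_trans hp2 (mem_le_sum hp1)
    have : Finset.Icc 1 a ⊆ (Finset.Icc 1 l.sum).filter (fun x => j < height l x) := by
      intro x hx
      rcases Finset.mem_Icc.1 hx with ⟨hx1, hx2⟩
      refine Finset.mem_filter.2 ⟨Finset.mem_Icc.2 ⟨hx1, le_trans hx2 hax⟩, ?_⟩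
      exact lt_of_lt_of_le h (height_anti l hx2)
    have := Finset.card_le_card this
    rw [Nat.card_Icc] at this
    unfold gg
    omega

lemma G2 {l : Ptn} (hl : IsPartition l) {c t : ℕ}
    (h1 : height l (c+1) ≤ t) (h2 : t < height l c) : gg l t = c := by
  have hle : gg l t ≤ c := by
    by_contra h
    push_neg at h
    have := (G3 hl (by omega : 1 ≤ c+1) t).1 (by omega)
    omega
  rcases Nat.eq_zero_or_pos c with hc | hc
  · omega
  · have := (G3 hl hc t).2 h2
    omega

lemma card_le_sum {l : Ptn} (hl : IsPartition l) : Multiset.card l ≤ l.sum := by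
  have := Multiset.card_nsmul_le_sum (s := l) (a := 1) (fun x hx => hl x hx)
  simpa using this

lemma psum_le_sum {l : Ptn} (hl : IsPartition l) (j : ℕ) : psum l j ≤ l.sum := by
  unfold psum
  calc ∑ a ∈ Finset.Icc 1 l.sum, min j (height l a)
      ≤ ∑ a ∈ Finset.Icc 1 l.sum, height l a :=
        Finset.sum_le_sum (fun a _ => Nat.min_le_right _ _)
    _ = l.sum := sum_heights l

lemma psum_eq_sum_of_card_le {l : Ptn} (hl : IsPartition l) {j : ℕ}
    (h : Multiset.card l ≤ j) : psum l j = l.sum := by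
  unfold psum
  have he : ∀ a ∈ Finset.Icc 1 l.sum, min j (height l a) = height l a := by
    intro a _
    have := height_le_card l a
    simp only [Nat.min_def]
    split_ifs <;> omega
  rw [Finset.sum_congr rfl he, sum_heights]

lemma psum_lt_sum {l : Ptn} (hl : IsPartition l) {j : ℕ} (h : j < Multiset.card l) :
    psum l j < l.sum := by
  have h1 : 1 ≤ gg l j := by
    rw [G3 hl (le_refl 1) j, height_one hl]
    exact h
  have h2 : psum l (j+1) ≤ l.sum := psum_le_sum hl (j+1)
  rw [psum_succ] at h2
  omega

lemma card_le_of_psum {l : Ptn} (hl : IsPartition l) {j : ℕ} (h : psum l j = l.sum) :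
    Multiset.card l ≤ j := by
  by_contra hc
  push_neg at hc
  exact absurd h (Nat.ne_of_lt (psum_lt_sum hl hc))

end Aux


section Parity

open Multiset

/-- Bad-parity condition on index `i`. -/
def badI (X : PType) (l : Ptn) (i : ℕ) : Prop :=
  if X = PType.C then Odd (psum l i) else Odd (psum l i + i)

lemma not_badI_zero (X : PType) (l : Ptn) : ¬ badI X l 0 := by
  unfold badI
  split_ifs <;> simp [psum_zero, Nat.odd_iff]

lemma psum_split {l : Ptn} (hl : IsPartition l) {u i : ℕ} (hu : 1 ≤ u) (hi : 1 ≤ i)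
    (h1 : height l (u+1) ≤ i - 1) (h2 : i ≤ height l u) :
    psum l i = i * u + ∑ a ∈ Finset.Icc (u+1) l.sum, height l a := by
  have husum : u ≤ l.sum := by
    have hpos : 0 < height l u := by omega
    unfold height at hpos
    rw [Multiset.card_pos_iff_exists_mem] at hpos
    obtain ⟨p, hp⟩ := hpos
    rcases Multiset.mem_filter.1 hp with ⟨hp1, hp2⟩
    exact le_trans hp2 (mem_le_sum hp1)
  unfold psum
  have hsplit : ∑ a ∈ Finset.Ioc 0 u, min i (height l a)
      + ∑ a ∈ Finset.Ioc u l.sum, min i (height l a)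
      = ∑ a ∈ Finset.Ioc 0 l.sum, min i (height l a) :=
    Finset.sum_Ioc_consecutive _ (by omega) husum
  rw [show Finset.Icc 1 l.sum = Finset.Ioc 0 l.sum from (Finset.Icc_add_one_left_eq_Ioc 0 l.sum),
    ← hsplit]
  have e1 : ∑ a ∈ Finset.Ioc 0 u, min i (height l a) = i * u := by
    have : ∀ a ∈ Finset.Ioc 0 u, min i (height l a) = i := by
      intro a ha
      rcases Finset.mem_Ioc.1 ha with ⟨ha1, ha2⟩
      have : i ≤ height l a := le_trans h2 (height_anti l ha2)
      simp only [Nat.min_def]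
      split_ifs <;> omega
    rw [Finset.sum_congr rfl this, Finset.sum_const, Nat.card_Ioc]
    simp [Nat.mul_comm]
  have e2 : ∀ a ∈ Finset.Ioc u l.sum, min i (height l a) = height l a := by
    intro a ha
    rcases Finset.mem_Ioc.1 ha with ⟨ha1, _⟩
    have : height l a ≤ height l (u+1) := height_anti l (by omega)
    simp only [Nat.min_def]
    split_ifs <;> omega
  rw [e1, Finset.sum_congr rfl e2,
    show Finset.Ioc u l.sum = Finset.Icc (u+1) l.sum from (Finset.Icc_add_one_left_eq_Ioc u l.sum).symm]

lemma sum2_aux (l : Ptn) (u : ℕ) : ∀ M : ℕ, (∀ p ∈ l, p ≤ M) →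
    ∑ a ∈ Finset.Icc (u+1) M, height l a
      = ((l.filter (fun p => u + 1 ≤ p)).map (fun p => p - u)).sum := by
  induction l using Multiset.induction_on with
  | empty => intro M _; simp [height]
  | cons b s ih =>
    intro M hM
    have hbM : b ≤ M := hM b (Multiset.mem_cons_self b s)
    have : ∀ a ∈ Finset.Icc (u+1) M, height (b ::ₘ s) a
        = height s a + (if a ≤ b then 1 else 0) := fun a _ => height_cons s b a
    rw [Finset.sum_congr rfl this, Finset.sum_add_distrib,
      ih M (fun p hp => hM p (Multiset.mem_cons_of_mem hp)), Finset.sum_boole,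
      Multiset.filter_cons]
    have hc : (Finset.filter (fun a => a ≤ b) (Finset.Icc (u+1) M)) = Finset.Icc (u+1) b := by
      ext x; simp only [Finset.mem_filter, Finset.mem_Icc]; omega
    rw [hc]
    split_ifs with hb
    · simp [Nat.card_Icc]
      omega
    · simp [Nat.card_Icc]
      omega

lemma map_sub_sum (u : ℕ) : ∀ (F : Ptn), (∀ p ∈ F, u ≤ p) →
    ((F.map (fun p => p - u)).sum + u * Multiset.card F = F.sum) := by
  intro F
  induction F using Multiset.induction_on with
  | empty => simp
  | cons b s ih =>
    intro h
    have hb : u ≤ b := h b (Multiset.mem_cons_self b s)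
    simp only [Multiset.map_cons, Multiset.sum_cons, Multiset.card_cons]
    have := ih (fun p hp => h p (Multiset.mem_cons_of_mem hp))
    have hnl : u * (Multiset.card s + 1) = u * Multiset.card s + u := by ring
    omega

lemma P1 {s : Ptn} (h : ∀ a : ℕ, Odd a → Even (Multiset.count a s)) : Even s.sum := by
  have hs : s.sum = ∑ a ∈ s.toFinset, (Multiset.count a s) * a := by
    conv_lhs => rw [← Multiset.map_id s]
    rw [Finset.sum_multiset_map_count]
    simp [smul_eq_mul]
  rw [hs]
  apply Finset.even_sum
  intro a _
  rcases Nat.even_or_odd a with ha | ha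
  · exact (Nat.even_mul).2 (Or.inr ha)
  · exact (Nat.even_mul).2 (Or.inl (h a ha))

lemma P2 {s : Ptn} (h : ∀ a : ℕ, Even a → Even (Multiset.count a s)) :
    Even (s.sum + Multiset.card s) := by
  have hs : s.sum + Multiset.card s = ∑ a ∈ s.toFinset, (Multiset.count a s) * (a + 1) := by
    have h1 : s.sum = ∑ a ∈ s.toFinset, (Multiset.count a s) * a := by
      conv_lhs => rw [← Multiset.map_id s]
      rw [Finset.sum_multiset_map_count]
      simp [smul_eq_mul]
    have h2 : Multiset.card s = ∑ a ∈ s.toFinset, Multiset.count a s :=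
      (Multiset.toFinset_sum_count_eq s).symm
    rw [h1, h2, ← Finset.sum_add_distrib]
    apply Finset.sum_congr rfl
    intro a _
    ring
  rw [hs]
  apply Finset.even_sum
  intro a _
  rcases Nat.even_or_odd a with ha | ha
  · exact (Nat.even_mul).2 (Or.inl (h a ha))
  · have : Even (a + 1) := by
      rcases ha with ⟨k, hk⟩
      exact ⟨k+1, by omega⟩
    exact (Nat.even_mul).2 (Or.inr this)

lemma badPart_iff_C (a : ℕ) : badPart PType.C a ↔ Odd a := Iff.rfl

lemma badPart_iff_notC {X : PType} (hX : X ≠ PType.C) (a : ℕ) : badPart X a ↔ Even a := by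
  cases X with
  | B => exact Iff.rfl
  | C => exact absurd rfl hX
  | D => exact Iff.rfl

/-- Rigidity: at a bad-parity index, a partition in `𝒫_X` has equal consecutive parts. -/
lemma rigidity {X : PType} {v : Ptn} (hv : InP X v) {i : ℕ} (hi : 1 ≤ i)
    (hbad : badI X v i) : gg v (i-1) = gg v i := by
  obtain ⟨hvp, hvc⟩ := hv
  by_contra hne
  have hlt : gg v i < gg v (i-1) := lt_of_le_of_ne (gg_anti v (by omega)) (fun h => hne h.symm)
  set u := gg v (i-1) with hu
  have hu1 : 1 ≤ u := by omega
  have hhu_ge : i - 1 < height v u := (G3 hvp hu1 (i-1)).1 (le_refl u)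
  have hhu_le : height v u ≤ i := by
    by_contra hc
    push_neg at hc
    have := (G3 hvp hu1 i).2 hc
    omega
  have hh' : height v (u+1) ≤ i - 1 := by
    by_contra hc
    push_neg at hc
    have := (G3 hvp (by omega : 1 ≤ u+1) (i-1)).1
    have := (G3 hvp (by omega : 1 ≤ u+1) (i-1)).2 hc
    omega
  set h' := height v (u+1) with hh'def
  have hcount : Multiset.count u v = i - h' := by
    have := height_succ_add_count v u
    omega
  have hsplit := psum_split hvp hu1 hi hh' (by omega)
  have hsum2 := sum2_aux v u v.sum (fun p hp => mem_le_sum hp)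
  set F := v.filter (fun p => u + 1 ≤ p) with hF
  have hcardF : Multiset.card F = h' := rfl
  have hmap := map_sub_sum u F (fun p hp => by
    have := (Multiset.mem_filter.1 hp).2
    omega)
  -- psum v i = i*u + R,  R + u*h' = F.sum
  have hkey : psum v i + u * h' = i * u + F.sum := by
    rw [hsplit, hsum2]
    rw [hcardF] at hmap
    omega
  have hFcount : ∀ a : ℕ, Multiset.count a F = if u + 1 ≤ a then Multiset.count a v else 0 := by
    intro a
    rw [hF, Multiset.count_filter]
  by_cases hX : X = PType.C
  · subst hX
    have hEF : Even F.sum := by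
      apply P1
      intro a ha
      rw [hFcount a]
      split_ifs with h
      · exact hvc a ((badPart_iff_C a).2 ha)
      · exact Even.zero
    have hOdd : Odd (psum v i) := by simpa [badI] using hbad
    -- odd = i*u + F.sum - u*h' with F.sum even
    have h3 : Odd (i * u + u * h') := by
      rcases hEF with ⟨k, hk⟩
      rcases hOdd with ⟨k2, hk2⟩
      rw [Nat.odd_iff]
      omega
    have h4 : Odd (u * (i + h')) := by
      have : u * (i + h') = i * u + u * h' := by ring
      rw [this]
      exact h3
    rcases (Nat.odd_mul.1 h4) with ⟨hu_odd, hih_odd⟩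
    have hce : Even (Multiset.count u v) := hvc u ((badPart_iff_C u).2 hu_odd)
    rw [hcount] at hce
    rw [Nat.odd_iff] at hih_odd
    rw [Nat.even_iff] at hce
    omega
  · have hEF : Even (F.sum + Multiset.card F) := by
      apply P2
      intro a ha
      rw [hFcount a]
      split_ifs with h
      · exact hvc a ((badPart_iff_notC hX a).2 ha)
      · exact Even.zero
    have hOdd : Odd (psum v i + i) := by
      unfold badI at hbad
      rw [if_neg hX] at hbad
      exact hbad
    rw [hcardF] at hEF
    have h3 : Odd (i * u + u * h' + i + h') := by
      rcases hEF with ⟨k, hk⟩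
      rcases hOdd with ⟨k2, hk2⟩
      rw [Nat.odd_iff]
      omega
    have h4 : Odd ((u + 1) * (i + h')) := by
      have : (u + 1) * (i + h') = i * u + u * h' + i + h' := by ring
      rw [this]
      exact h3
    rcases (Nat.odd_mul.1 h4) with ⟨hu_odd, hih_odd⟩
    have hu_even : Even u := by
      rcases Nat.even_or_odd u with h | h
      · exact h
      · rw [Nat.odd_iff] at h hu_odd; omega
    have hce : Even (Multiset.count u v) := hvc u ((badPart_iff_notC hX u).2 hu_even)
    rw [hcount] at hce
    rw [Nat.odd_iff] at hih_odd
    rw [Nat.even_iff] at hce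
    omega

end Parity


section Move

open Multiset

variable {l : Ptn} {b e : ℕ}

/-- Move a box from (the last row of) the `b`-block down to just below the `e`-block. -/
def mvP (l : Ptn) (b e : ℕ) : Ptn := (b-1) ::ₘ (e+1) ::ₘ ((l.erase b).erase e)

structure MoveOK (l : Ptn) (b e : ℕ) : Prop where
  hb : b ∈ l
  he : e ∈ l ∨ e = 0
  hbe : e + 2 ≤ b

namespace MoveOK

variable (hl : IsPartition l) (mk : MoveOK l b e)

lemma decomp (hl : IsPartition l) (mk : MoveOK l b e) :
    l = b ::ₘ e ::ₘ ((l.erase b).erase e) ∨ (e = 0 ∧ l = b ::ₘ ((l.erase b).erase e)) := by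
  rcases mk.he with he | he
  · left
    have hne : e ≠ b := by have := mk.hbe; omega
    have he' : e ∈ l.erase b := (Multiset.mem_erase_of_ne hne).2 he
    rw [Multiset.cons_erase he', Multiset.cons_erase mk.hb]
  · right
    refine ⟨he, ?_⟩
    have : e ∉ l.erase b := by
      intro hc
      have := hl e (Multiset.mem_of_le (Multiset.erase_le b l) hc)
      omega
    rw [Multiset.erase_of_notMem this, Multiset.cons_erase mk.hb]

lemma sum_eq (hl : IsPartition l) (mk : MoveOK l b e) : (mvP l b e).sum = l.sum := by
  have hbe := mk.hbe
  rcases mk.decomp hl with h | ⟨he, h⟩ <;>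
    · conv_rhs => rw [h]
      simp [mvP, Multiset.sum_cons]
      omega

lemma isPartition (hl : IsPartition l) (mk : MoveOK l b e) : IsPartition (mvP l b e) := by
  intro a ha
  have hbe := mk.hbe
  rcases Multiset.mem_cons.1 ha with h | ha'
  · omega
  rcases Multiset.mem_cons.1 ha' with h | ha''
  · omega
  · exact hl a (Multiset.mem_of_le (le_trans (Multiset.erase_le e _) (Multiset.erase_le b l)) ha'')

lemma height_l (hl : IsPartition l) (mk : MoveOK l b e) (x : ℕ) (hx : 1 ≤ x) :
    height l x = height ((l.erase b).erase e) x
      + (if x ≤ b then 1 else 0) + (if x ≤ e then 1 else 0) := by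
  rcases mk.decomp hl with h | ⟨he, h⟩
  · conv_lhs => rw [h]
    rw [height_cons, height_cons]
    omega
  · conv_lhs => rw [h]
    rw [height_cons]
    have hxe : ¬ (x ≤ e) := by omega
    rw [if_neg hxe]
    simp

lemma height_mv (x : ℕ) :
    height (mvP l b e) x = height ((l.erase b).erase e) x
      + (if x ≤ b - 1 then 1 else 0) + (if x ≤ e + 1 then 1 else 0) := by
  unfold mvP
  rw [height_cons, height_cons]
  omega

/-- The psum window formula for a move. -/
lemma psum_eq (hl : IsPartition l) (mk : MoveOK l b e) (j : ℕ) :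
    psum (mvP l b e) j
      + (if height l b ≤ j ∧ j ≤ height l (e+1) then 1 else 0) = psum l j := by
  have hbe := mk.hbe
  have hbsum : b ≤ l.sum := mem_le_sum mk.hb
  have hH1 : 1 ≤ height l b := height_pos_of_mem mk.hb
  have hH12 : height l b ≤ height l (e+1) := height_anti l (by omega)
  unfold psum
  rw [mk.sum_eq hl]
  have hbmem : b ∈ Finset.Icc 1 l.sum := Finset.mem_Icc.2 ⟨by omega, hbsum⟩
  have hemem : e + 1 ∈ (Finset.Icc 1 l.sum).erase b :=
    Finset.mem_erase.2 ⟨by omega, Finset.mem_Icc.2 ⟨by omega, by omega⟩⟩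
  rw [← Finset.add_sum_erase _ _ hbmem, ← Finset.add_sum_erase _ _ hemem]
  conv_rhs => rw [← Finset.add_sum_erase _ _ hbmem, ← Finset.add_sum_erase _ _ hemem]
  have hcongr : ∀ x ∈ ((Finset.Icc 1 l.sum).erase b).erase (e+1),
      min j (height (mvP l b e) x) = min j (height l x) := by
    intro x hx
    rcases Finset.mem_erase.1 hx with ⟨hx1, hx2⟩
    rcases Finset.mem_erase.1 hx2 with ⟨hx3, hx4⟩
    rcases Finset.mem_Icc.1 hx4 with ⟨hx5, _⟩
    rw [height_mv, mk.height_l hl x hx5]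
    congr 1
    split_ifs <;> omega
  rw [Finset.sum_congr rfl hcongr]
  have hb' : height (mvP l b e) b + 1 = height l b := by
    rw [height_mv, mk.height_l hl b (by omega)]
    split_ifs <;> omega
  have he' : height (mvP l b e) (e+1) = height l (e+1) + 1 := by
    rw [height_mv, mk.height_l hl (e+1) (by omega)]
    split_ifs <;> omega
  have hmin : min j (height (mvP l b e) b) + min j (height (mvP l b e) (e+1))
      + (if height l b ≤ j ∧ j ≤ height l (e+1) then 1 else 0)
      = min j (height l b) + min j (height l (e+1)) := by
    simp only [Nat.min_def]
    split_ifs <;> omega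
  omega

lemma dom (hl : IsPartition l) (mk : MoveOK l b e) : Dom (mvP l b e) l := by
  intro j
  have := mk.psum_eq hl j
  omega

lemma psum_lt (hl : IsPartition l) (mk : MoveOK l b e) :
    psum (mvP l b e) (height l b) < psum l (height l b) := by
  have := mk.psum_eq hl (height l b)
  have hH12 : height l b ≤ height l (e+1) := height_anti l (by have := mk.hbe; omega)
  rw [if_pos ⟨le_refl _, hH12⟩] at this
  omega

end MoveOK

/-- The strictness lemma: below a window of bad indices ending at a corner,
partitions of `𝒫_X` dominated by `l` are strictly below `l`. -/
lemma strict_window {X : PType} {l v : Ptn} (hl : IsPartition l) (hv : InP X v)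
    (hdom : Dom v l) {w2 : ℕ} (hw2 : 1 ≤ w2) (hcorner : gg l w2 < gg l (w2-1)) :
    ∀ d i, w2 = i + d → 1 ≤ i → (∀ t, i ≤ t → t ≤ w2 → badI X l t) →
      psum v i < psum l i := by
  intro d
  induction d with
  | zero =>
    intro i hi hi1 hbad
    have hiw : i = w2 := by omega
    subst hiw
    by_contra hc
    push_neg at hc
    have heq : psum v i = psum l i := le_antisymm (hdom i) hc
    have hbadv : badI X v i := by
      unfold badI at *
      have := hbad i (le_refl i) (le_refl i)
      split_ifs at * <;> rw [heq] <;> assumption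
    have hrig := rigidity hv hi1 hbadv
    have e1 : psum v i = psum v (i-1) + gg v (i-1) := by
      have := psum_succ v (i-1)
      rw [show i - 1 + 1 = i by omega] at this
      omega
    have e2 : psum v (i+1) = psum v i + gg v i := psum_succ v i
    have e3 : psum l i = psum l (i-1) + gg l (i-1) := by
      have := psum_succ l (i-1)
      rw [show i - 1 + 1 = i by omega] at this
      omega
    have e4 : psum l (i+1) = psum l i + gg l i := psum_succ l i
    have d1 := hdom (i-1)
    have d2 := hdom (i+1)
    omega
  | succ d ih =>
    intro i hi hi1 hbad
    by_contra hc
    push_neg at hc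
    have heq : psum v i = psum l i := le_antisymm (hdom i) hc
    have hbadv : badI X v i := by
      unfold badI at *
      have := hbad i (le_refl i) (by omega)
      split_ifs at * <;> rw [heq] <;> assumption
    have hrig := rigidity hv hi1 hbadv
    have e1 : psum v i = psum v (i-1) + gg v (i-1) := by
      have := psum_succ v (i-1)
      rw [show i - 1 + 1 = i by omega] at this
      omega
    have e2 : psum v (i+1) = psum v i + gg v i := psum_succ v i
    have e3 : psum l i = psum l (i-1) + gg l (i-1) := by
      have := psum_succ l (i-1)
      rw [show i - 1 + 1 = i by omega] at this
      omega
    have e4 : psum l (i+1) = psum l i + gg l i := psum_succ l i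
    have d1 := hdom (i-1)
    have d2 := hdom (i+1)
    by_cases hcor : gg l i < gg l (i-1)
    · omega
    · have hflat : gg l (i-1) = gg l i :=
        le_antisymm (by omega) (gg_anti l (by omega))
      have hnext : psum v (i+1) < psum l (i+1) :=
        ih (i+1) (by omega) (by omega) (fun t ht1 ht2 => hbad t (by omega) ht2)
      omega

/-- If no corner of `l` is bad, then `l ∈ 𝒫_X`. -/
lemma inP_of_no_bad_corner {X : PType} {l : Ptn} (hl : IsPartition l)
    (h : ∀ i, 1 ≤ i → gg l i < gg l (i-1) → ¬ badI X l i) : InP X l := by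
  refine ⟨hl, ?_⟩
  intro a hbad_a
  by_cases hmem : a ∈ l
  · have ha1 : 1 ≤ a := hl a hmem
    set i := height l a with hidef
    set h' := height l (a+1) with hh'def
    have hi1 : 1 ≤ i := height_pos_of_mem hmem
    have hcount : Multiset.count a l = i - h' := by
      have := height_succ_add_count l a
      omega
    have hh'i : h' + Multiset.count a l = i := by
      have := height_succ_add_count l a
      omega
    have hcpos : 0 < Multiset.count a l := Multiset.count_pos.2 hmem
    -- corner at i
    have hg1 : gg l (i-1) = a := by
      have hge : a ≤ gg l (i-1) := (G3 hl ha1 (i-1)).2 (by omega)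
      have hle : gg l (i-1) ≤ a := by
        by_contra hcc
        push_neg at hcc
        have := (G3 hl (by omega : 1 ≤ a+1) (i-1)).1 (by omega)
        omega
      omega
    have hg2 : gg l i < a := by
      by_contra hcc
      push_neg at hcc
      have := (G3 hl ha1 i).1 hcc
      omega
    have hcorner_i : gg l i < gg l (i-1) := by omega
    have hgood_i := h i hi1 hcorner_i
    -- linearity between h' and i
    have hlin : psum l i = psum l h' + (i - h') * a := by
      have hstep : ∀ k : ℕ, k ≤ i - h' → psum l (h' + k) = psum l h' + k * a := by
        intro k
        induction k with
        | zero => simp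
        | succ k ihk =>
          intro hk
          have hk' := ihk (by omega)
          have hgg : gg l (h' + k) = a := G2 hl (by omega) (by omega)
          have := psum_succ l (h' + k)
          rw [show h' + k + 1 = h' + (k+1) by omega] at this
          rw [this, hk', hgg]
          ring
      have := hstep (i - h') (le_refl _)
      rw [show h' + (i - h') = i by omega] at this
      exact this
    -- goodness at h'
    have hgood_h' : ¬ badI X l h' := by
      rcases Nat.eq_zero_or_pos h' with h0 | hpos
      · rw [h0]; exact not_badI_zero X l
      · apply h h' hpos
        have hgh : gg l h' = a := G2 hl (le_refl _) (by omega)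
        have hgh' : a + 1 ≤ gg l (h'-1) := (G3 hl (by omega) (h'-1)).2 (by omega)
        omega
    -- conclude parity
    by_cases hX : X = PType.C
    · subst hX
      have ha_odd : Odd a := hbad_a
      unfold badI at hgood_i hgood_h'
      rw [if_pos rfl] at hgood_i hgood_h'
      simp only [Nat.not_odd_iff] at hgood_i hgood_h'
      rw [hcount]
      rcases Nat.even_or_odd (i - h') with hpar | hpar
      · exact hpar
      · exfalso
        have hprod : Odd ((i - h') * a) := Nat.odd_mul.2 ⟨hpar, ha_odd⟩
        rw [Nat.odd_iff] at hprod
        omega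
    · have ha_even : Even a := (badPart_iff_notC hX a).1 hbad_a
      unfold badI at hgood_i hgood_h'
      rw [if_neg hX] at hgood_i hgood_h'
      simp only [Nat.not_odd_iff] at hgood_i hgood_h'
      rw [hcount]
      rcases Nat.even_or_odd (i - h') with hpar | hpar
      · exact hpar
      · exfalso
        have hodd1 : Odd (a + 1) := by
          rw [Nat.even_iff] at ha_even
          rw [Nat.odd_iff]
          omega
        have h5 : Odd ((i - h') * a + (i - h')) := by
          have hre : (i - h') * a + (i - h') = (i - h') * (a + 1) := by ring
          rw [hre]
          exact Nat.odd_mul.2 ⟨hpar, hodd1⟩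
        rw [Nat.odd_iff] at h5
        omega
  · rw [Multiset.count_eq_zero_of_notMem hmem]
    exact Even.zero

end Move


section MoveExists

open Multiset

lemma badI_succ {X : PType} {l : Ptn} {t : ℕ}
    (hpar : if X = PType.C then gg l t % 2 = 0 else gg l t % 2 = 1) :
    (badI X l t ↔ badI X l (t+1)) := by
  have hps := psum_succ l t
  unfold badI
  split_ifs at hpar ⊢ with hXc
  · rw [Nat.odd_iff, Nat.odd_iff, hps]; omega
  · rw [Nat.odd_iff, Nat.odd_iff, hps]; omega

lemma mem_of_heights {l : Ptn} {a : ℕ} (h : height l (a+1) < height l a) : a ∈ l := by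
  rw [← Multiset.count_pos]
  have := height_succ_add_count l a
  omega

lemma move_exists {X : PType} {l : Ptn} (hl : IsPartition l)
    (hC : X = PType.C → Even l.sum)
    (hbc : ∃ i, 1 ≤ i ∧ gg l i < gg l (i-1) ∧ badI X l i) :
    ∃ b e, MoveOK l b e ∧
      (∀ t, height l b ≤ t → t ≤ height l (e+1) → badI X l t) := by
  obtain ⟨i₀, hi₀, hcor, hbad⟩ := hbc
  set u := gg l (i₀ - 1) with hu_def
  have hu1 : 1 ≤ u := by omega
  have hhu_ge : i₀ - 1 < height l u := (G3 hl hu1 (i₀-1)).1 (le_refl u)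
  have hhu_le : height l u ≤ i₀ := by
    by_contra hc
    push_neg at hc
    have := (G3 hl hu1 i₀).2 hc
    omega
  have hhu : height l u = i₀ := by omega
  have h_up1 : height l (u+1) ≤ i₀ - 1 := by
    by_contra hc
    push_neg at hc
    have := (G3 hl (by omega : 1 ≤ u+1) (i₀-1)).2 hc
    omega
  have hmem_u : u ∈ l := mem_of_heights (by omega)
  set c := gg l i₀ with hc_def
  have hcu : c < u := hcor
  have h_c1_ge : i₀ ≤ height l (c+1) := le_trans (le_of_eq hhu.symm) (height_anti l (by omega))
  have h_c1_le : height l (c+1) ≤ i₀ := by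
    by_contra hcc
    push_neg at hcc
    have := (G3 hl (by omega : 1 ≤ c+1) i₀).2 hcc
    omega
  have h_c1 : height l (c+1) = i₀ := by omega
  have hcmem : c ∈ l ∨ c = 0 := by
    rcases Nat.eq_zero_or_pos c with h0 | hpos
    · exact Or.inr h0
    · left
      have h1 : i₀ < height l c := (G3 hl hpos i₀).1 (le_refl c)
      exact mem_of_heights (by omega)
  by_cases hcase1 : c + 2 ≤ u
  · -- simple move
    refine ⟨u, c, ⟨hmem_u, hcmem, hcase1⟩, ?_⟩
    intro t ht1 ht2
    rw [hhu] at ht1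
    rw [h_c1] at ht2
    have : t = i₀ := by omega
    rw [this]
    exact hbad
  · -- u = c + 1
    have huc : u = c + 1 := by omega
    -- parity dichotomy
    by_cases hsub2 : (if X = PType.C then c % 2 = 0 ∧ 1 ≤ c else c % 2 = 1)
    · -- move through the c-block
      have hc1 : 1 ≤ c := by
        split_ifs at hsub2 with hXc
        · exact hsub2.2
        · omega
      set w2 := height l c with hw2_def
      have hw2_gt : i₀ < w2 := (G3 hl hc1 i₀).1 (le_refl c)
      set d := gg l w2 with hd_def
      have hdc : d < c := by
        by_contra hcc
        push_neg at hcc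
        have := (G3 hl hc1 w2).1 hcc
        omega
      have h_d1_ge : w2 ≤ height l (d+1) :=
        le_trans (le_of_eq rfl) (height_anti l (by omega))
      have h_d1_le : height l (d+1) ≤ w2 := by
        by_contra hcc
        push_neg at hcc
        have := (G3 hl (by omega : 1 ≤ d+1) w2).2 hcc
        omega
      have h_d1 : height l (d+1) = w2 := by omega
      have hdmem : d ∈ l ∨ d = 0 := by
        rcases Nat.eq_zero_or_pos d with h0 | hpos
        · exact Or.inr h0
        · left
          have h1 : w2 < height l d := (G3 hl hpos w2).1 (le_refl d)
          exact mem_of_heights (by omega)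
      refine ⟨u, d, ⟨hmem_u, hdmem, by omega⟩, ?_⟩
      intro t ht1 ht2
      rw [hhu] at ht1
      rw [h_d1] at ht2
      -- badness run upward from i₀ to w2
      clear_value u
      induction t with
      | zero => omega
      | succ t iht =>
        rcases Nat.lt_or_ge t i₀ with h | h
        · have : t + 1 = i₀ := by omega
          rw [this]; exact hbad
        · have hgg : gg l t = c := G2 hl (by omega) (by omega)
          have hprev : badI X l t := iht (by omega) (by omega)
          refine (badI_succ ?_).1 hprev
          rw [hgg]
          split_ifs at hsub2 ⊢ with hXc
          · exact hsub2.1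
          · exact hsub2
    · -- move from above the u-block
      -- parity of u: C → even, else odd
      have hupar : if X = PType.C then u % 2 = 0 else u % 2 = 1 := by
        split_ifs at hsub2 ⊢ with hXc
        · -- ¬(c even ∧ c ≥ 1): so c odd or c = 0; c = 0 contradicts via hC
          rcases Nat.eq_zero_or_pos c with h0 | hpos
          · exfalso
            have hu1' : u = 1 := by omega
            have hcard : i₀ = Multiset.card l := by rw [← height_one hl, ← hu1', hhu]
            have hps : psum l i₀ = l.sum := psum_eq_sum_of_card_le hl (by omega)
            have hodd : Odd l.sum := by
              unfold badI at hbad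
              rw [if_pos hXc] at hbad
              rw [← hps]
              exact hbad
            have := hC hXc
            rw [Nat.even_iff] at this
            rw [Nat.odd_iff] at hodd
            omega
          · omega
        · omega
      set p' := height l (u+1) with hp'_def
      rcases Nat.eq_zero_or_pos p' with hp0 | hp1
      · -- no parts above u: contradiction with badness at i₀
        exfalso
        have hsplit := psum_split hl hu1 hi₀ (by omega) (by omega)
        have hzero : ∑ a ∈ Finset.Icc (u+1) l.sum, height l a = 0 := by
          apply Finset.sum_eq_zero
          intro a ha
          rcases Finset.mem_Icc.1 ha with ⟨ha1, _⟩
          have : height l a ≤ height l (u+1) := height_anti l ha1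
          omega
        rw [hzero, Nat.add_zero] at hsplit
        unfold badI at hbad
        split_ifs at hbad hupar with hXc
        · rw [Nat.odd_iff, hsplit, Nat.mul_mod, hupar] at hbad
          simp at hbad
        · have hre : i₀ * u + i₀ = i₀ * (u + 1) := by ring
          rw [Nat.odd_iff, hsplit, hre, Nat.mul_mod] at hbad
          have h2 : (u + 1) % 2 = 0 := by omega
          rw [h2] at hbad
          simp at hbad
      · have hp'i : p' ≤ i₀ - 1 := h_up1
        set b := gg l (p'-1) with hb_def
        have hb_ge : u + 1 ≤ b := (G3 hl (by omega : 1 ≤ u+1) (p'-1)).2 (by omega)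
        have hhb_ge : p' - 1 < height l b := (G3 hl (by omega : 1 ≤ b) (p'-1)).1 (le_refl b)
        have hggp' : gg l p' = u := G2 hl (le_refl p') (by omega)
        have hhb_le : height l b ≤ p' := by
          by_contra hcc
          push_neg at hcc
          have := (G3 hl (by omega : 1 ≤ b) p').2 hcc
          omega
        have hhb : height l b = p' := by omega
        have hhb1 : height l (b+1) ≤ p' - 1 := by
          by_contra hcc
          push_neg at hcc
          have := (G3 hl (by omega : 1 ≤ b+1) (p'-1)).2 hcc
          omega
        have hbmem : b ∈ l := mem_of_heights (by omega)
        refine ⟨b, c, ⟨hbmem, hcmem, by omega⟩, ?_⟩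
        intro t ht1 ht2
        rw [hhb] at ht1
        rw [h_c1] at ht2
        -- badness run downward from i₀ to p'
        have hrun : ∀ k t', t' + k = i₀ → p' ≤ t' → badI X l t' := by
          intro k
          induction k with
          | zero =>
            intro t' ht' _
            rw [show t' = i₀ by omega]
            exact hbad
          | succ k ihk =>
            intro t' ht' hp
            have hgg : gg l t' = u := G2 hl (by omega) (by omega)
            refine (badI_succ ?_).2 (ihk (t'+1) (by omega) (by omega))
            rw [hgg]
            exact hupar
        exact hrun (i₀ - t) t (by omega) ht1

end MoveExists


section Exists

open Multiset

lemma isCollapse_exists {X : PType} (w : ℕ) :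
    ∀ (l : Ptn), (∑ t ∈ Finset.range (l.sum + 1), psum l t) = w → IsPartition l →
      (X = PType.C → Even l.sum) → ∃ m, IsCollapse X l m := by
  induction w using Nat.strong_induction_on with
  | _ w ih =>
    intro l hw hl hC
    by_cases hbc : ∃ i, 1 ≤ i ∧ gg l i < gg l (i-1) ∧ badI X l i
    · obtain ⟨b, e, mk, hwin⟩ := move_exists hl hC hbc
      have hsum' : (mvP l b e).sum = l.sum := mk.sum_eq hl
      have hl'p : IsPartition (mvP l b e) := mk.isPartition hl
      have hdom' : Dom (mvP l b e) l := mk.dom hl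
      have hH1card : height l b ≤ l.sum := le_trans (height_le_card l b) (card_le_sum hl)
      have hH1pos : 1 ≤ height l b := height_pos_of_mem mk.hb
      have hH12 : height l b ≤ height l (e+1) := height_anti l (by have := mk.hbe; omega)
      have hH2pos : 1 ≤ height l (e+1) := by omega
      have hcornerH2 : gg l (height l (e+1)) < gg l (height l (e+1) - 1) := by
        have h1 : e + 1 ≤ gg l (height l (e+1) - 1) :=
          (G3 hl (by omega : 1 ≤ e+1) _).2 (by omega)
        have h2 : gg l (height l (e+1)) < e + 1 := by
          by_contra hcc
          push_neg at hcc
          have := (G3 hl (by omega : 1 ≤ e+1) (height l (e+1))).1 hcc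
          omega
        omega
      have hmeas : (∑ t ∈ Finset.range ((mvP l b e).sum + 1), psum (mvP l b e) t) < w := by
        rw [hsum', ← hw]
        apply Finset.sum_lt_sum
        · intro t _; exact hdom' t
        · exact ⟨height l b, Finset.mem_range.2 (by omega), mk.psum_lt hl⟩
      obtain ⟨m, hmP, hmsum, hmdom, hmmax⟩ :=
        ih _ hmeas (mvP l b e) rfl hl'p (fun h => by rw [hsum']; exact hC h)
      refine ⟨m, hmP, by rw [hmsum, hsum'], fun j => le_trans (hmdom j) (hdom' j), ?_⟩
      intro v hvP hvsum hvdom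
      apply hmmax v hvP (by rw [hvsum, hsum'])
      intro j
      have hpsum := mk.psum_eq hl j
      by_cases hwj : height l b ≤ j ∧ j ≤ height l (e+1)
      · rw [if_pos hwj] at hpsum
        have hstrict : psum v j < psum l j :=
          strict_window hl hvP hvdom hH2pos hcornerH2 (height l (e+1) - j) j
            (by omega) (by omega) (fun t ht1 ht2 => hwin t (by omega) ht2)
        omega
      · rw [if_neg hwj] at hpsum
        have := hvdom j
        omega
    · refine ⟨l, inP_of_no_bad_corner hl (fun i h1 h2 hb => hbc ⟨i, h1, h2, hb⟩), rfl,
        fun j => le_refl _, fun v _ _ hd => hd⟩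

lemma collapseDefined_of {X : PType} {l : Ptn} (hl : IsPartition l)
    (hC : X = PType.C → Even l.sum) : CollapseDefined X l := by
  obtain ⟨m, hm⟩ := isCollapse_exists _ l rfl hl hC
  exact ⟨m, hm⟩

lemma isCollapse_card_lower {X : PType} {l m : Ptn} (hl : IsPartition l)
    (h : IsCollapse X l m) : Multiset.card l ≤ Multiset.card m := by
  obtain ⟨⟨hmp, _⟩, hsum, hdom, _⟩ := h
  by_contra hc
  push_neg at hc
  have h1 : psum m (Multiset.card m) = m.sum := psum_eq_sum_of_card_le hmp (le_refl _)
  have h2 := hdom (Multiset.card m)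
  have h3 : psum l (Multiset.card m) < l.sum := psum_lt_sum hl hc
  omega

lemma isCollapse_card_upper {X : PType} {l m w : Ptn} (h : IsCollapse X l m) (hw : InP X w)
    (hwsum : w.sum = l.sum) (hwdom : Dom w l) : Multiset.card m ≤ Multiset.card w := by
  obtain ⟨⟨hmp, _⟩, hsum, hdom, hmax⟩ := h
  have hd : Dom w m := hmax w hw hwsum hwdom
  have h1 : psum w (Multiset.card w) = w.sum := psum_eq_sum_of_card_le hw.1 (le_refl _)
  have h2 := hd (Multiset.card w)
  have h3 : psum m (Multiset.card w) ≤ m.sum := psum_le_sum hmp _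
  apply card_le_of_psum hmp
  omega

lemma inP_C_sum_even {m : Ptn} (h : InP PType.C m) : Even m.sum :=
  P1 (fun a ha => h.2 a ha)

lemma inP_BD_parity {X : PType} (hX : X ≠ PType.C) {m : Ptn} (h : InP X m) :
    Even (m.sum + Multiset.card m) :=
  P2 (fun a ha => h.2 a ((badPart_iff_notC hX a).2 ha))

lemma collapse_eq_of_defined {X : PType} {l : Ptn} (h : CollapseDefined X l) :
    IsCollapse X l (collapse X l) := by
  unfold collapse
  rw [dif_pos h]
  exact h.choose_spec

end Exists


section Balanced

open Multiset

/-- Near-balanced partition with `r` parts `q+1` and `k - r` parts `q`. -/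
def balP (q r k : ℕ) : Ptn :=
  Multiset.replicate r (q+1) + Multiset.replicate (k - r) q

lemma height_replicate (m v a : ℕ) :
    height (Multiset.replicate m v) a = if a ≤ v then m else 0 := by
  induction m with
  | zero => simp [height]
  | succ m ih =>
    rw [Multiset.replicate_succ, height_cons, ih]
    split_ifs <;> omega

lemma height_add (s t : Ptn) (a : ℕ) : height (s + t) a = height s a + height t a := by
  unfold height
  rw [Multiset.filter_add, Multiset.card_add]

variable {q r k : ℕ}

lemma balP_card : Multiset.card (balP q r k) = r + (k - r) := by
  simp [balP]

lemma balP_genuine (hq : 1 ≤ q) : IsPartition (balP q r k) := by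
  intro a ha
  rcases Multiset.mem_add.1 ha with h | h <;>
    · have := Multiset.eq_of_mem_replicate h
      omega

lemma balP_sum (hrk : r ≤ k) : (balP q r k).sum = k * q + r := by
  simp only [balP, Multiset.sum_add, Multiset.sum_replicate, smul_eq_mul]
  obtain ⟨s, hs⟩ := Nat.exists_eq_add_of_le hrk
  subst hs
  have h1 : r + s - r = s := by omega
  rw [h1]
  ring

lemma balP_height (hrk : r < k) {a : ℕ} (ha : 1 ≤ a) :
    height (balP q r k) a = (if a ≤ q then k else if a = q + 1 then r else 0) := by
  unfold balP
  rw [height_add, height_replicate, height_replicate]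
  split_ifs <;> omega

lemma balP_count (a : ℕ) :
    Multiset.count a (balP q r k)
      = (if a = q + 1 then r else 0) + (if a = q then k - r else 0) := by
  unfold balP
  rw [Multiset.count_add, Multiset.count_replicate, Multiset.count_replicate]
  split_ifs <;> omega

lemma balP_psum (hq : 1 ≤ q) (hk : 1 ≤ k) (hrk : r < k) (j : ℕ) :
    psum (balP q r k) j = q * min j k + min j r := by
  have hsum : (balP q r k).sum = k * q + r := balP_sum (le_of_lt hrk)
  have hqle : q ≤ k * q + r := by
    have : 1 * q ≤ k * q := Nat.mul_le_mul_right q hk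
    omega
  unfold psum
  rw [hsum, show Finset.Icc 1 (k*q+r) = Finset.Ioc 0 (k*q+r) from Finset.Icc_add_one_left_eq_Ioc _ _,
    ← Finset.sum_Ioc_consecutive _ (Nat.zero_le q) hqle]
  have e1 : ∑ a ∈ Finset.Ioc 0 q, min j (height (balP q r k) a) = q * min j k := by
    have hterm : ∀ a ∈ Finset.Ioc 0 q, min j (height (balP q r k) a) = min j k := by
      intro a ha
      rcases Finset.mem_Ioc.1 ha with ⟨ha1, ha2⟩
      rw [balP_height hrk (by omega), if_pos ha2]
    rw [Finset.sum_congr rfl hterm, Finset.sum_const, Nat.card_Ioc, smul_eq_mul]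
    simp
  have e2 : ∑ a ∈ Finset.Ioc q (k*q+r), min j (height (balP q r k) a) = min j r := by
    rcases Nat.eq_zero_or_pos r with h0 | hr1
    · have hterm : ∀ a ∈ Finset.Ioc q (k*q+r), min j (height (balP q r k) a) = 0 := by
        intro a ha
        rcases Finset.mem_Ioc.1 ha with ⟨ha1, ha2⟩
        rw [balP_height hrk (by omega)]
        split_ifs <;> omega
      rw [Finset.sum_congr rfl hterm, Finset.sum_const_zero]
      omega
    · have hq1mem : q + 1 ∈ Finset.Ioc q (k*q+r) := by
        rw [Finset.mem_Ioc]
        have h5 : 1 * q ≤ k * q := Nat.mul_le_mul_right q hk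
        omega
      rw [← Finset.add_sum_erase _ _ hq1mem]
      have hterm : ∀ a ∈ (Finset.Ioc q (k*q+r)).erase (q+1),
          min j (height (balP q r k) a) = 0 := by
        intro a ha
        rcases Finset.mem_erase.1 ha with ⟨ha1, ha2⟩
        rcases Finset.mem_Ioc.1 ha2 with ⟨ha3, _⟩
        rw [balP_height hrk (by omega)]
        split_ifs <;> omega
      rw [Finset.sum_congr rfl hterm, Finset.sum_const_zero]
      rw [balP_height hrk (by omega : 1 ≤ q+1)]
      have : ¬ (q + 1 ≤ q) := by omega
      rw [if_neg this, if_pos rfl]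
      omega
  rw [e1, e2]

lemma balP_dom {l : Ptn} (hl : IsPartition l) (hq : 1 ≤ q) (hk : 1 ≤ k) (hrk : r < k)
    (hcard : Multiset.card l = k) (hsum : l.sum = k * q + r) :
    Dom (balP q r k) l := by
  intro j
  rw [balP_psum hq hk hrk j]
  rcases Nat.lt_or_ge j k with hjk | hjk
  · rcases Nat.eq_zero_or_pos j with h0 | hj1
    · subst h0
      simp [psum_zero]
    · have hminjr : min j r ≤ j := Nat.min_le_left _ _
      have hminjr' : min j r ≤ r := Nat.min_le_right _ _
      have hminjk : min j k = j := Nat.min_eq_left (le_of_lt hjk)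
      by_cases hcase : q + 1 ≤ gg l (j-1)
      · have hlow : j * gg l (j-1) ≤ psum l j := by
          rw [psum_eq_sum_range]
          calc j * gg l (j-1) = (Finset.range j).card * gg l (j-1) := by
                rw [Finset.card_range]
            _ ≤ ∑ t ∈ Finset.range j, gg l t := by
                rw [← smul_eq_mul]
                apply Finset.card_nsmul_le_sum
                intro t ht
                exact gg_anti l (by
                  have := Finset.mem_range.1 ht
                  omega)
        have h2 : j * (q + 1) ≤ j * gg l (j-1) := Nat.mul_le_mul_left j hcase
        have h3 : j * (q + 1) = j * q + j := by ring
        have h4 : q * j = j * q := by ring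
        rw [hminjk]
        omega
      · push_neg at hcase
        have hggle : gg l (j-1) ≤ q := by omega
        obtain ⟨sd, hs⟩ := Nat.exists_eq_add_of_le (le_of_lt hjk)
        have hpk : psum l k = l.sum := psum_eq_sum_of_card_le hl (le_of_eq hcard)
        have hsplitsum : psum l k = psum l j + ∑ t ∈ Finset.Ico j k, gg l t := by
          rw [psum_eq_sum_range, psum_eq_sum_range, Finset.range_eq_Ico,
            ← Finset.sum_Ico_consecutive _ (Nat.zero_le j) (le_of_lt hjk), Finset.range_eq_Ico]
        have hbound : ∑ t ∈ Finset.Ico j k, gg l t ≤ (k - j) * q := by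
          calc ∑ t ∈ Finset.Ico j k, gg l t ≤ ∑ t ∈ Finset.Ico j k, q := by
                apply Finset.sum_le_sum
                intro t ht
                rcases Finset.mem_Ico.1 ht with ⟨ht1, _⟩
                exact le_trans (gg_anti l (by omega)) hggle
            _ = (k - j) * q := by
                rw [Finset.sum_const, Nat.card_Ico, smul_eq_mul]
        subst hs
        have he1 : j + sd - j = sd := by omega
        rw [he1] at hbound
        have he2 : (j + sd) * q = j * q + sd * q := by ring
        have h4 : q * j = j * q := by ring
        rw [hminjk]
        omega
  · have hminjk : min j k = k := Nat.min_eq_right hjk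
    have hminjr : min j r = r := Nat.min_eq_right (by omega)
    have hpj : psum l j = l.sum := psum_eq_sum_of_card_le hl (by omega)
    have h4 : q * k = k * q := by ring
    rw [hminjk, hminjr]
    omega

lemma balP_inP_C (hq : 1 ≤ q) (hrk : r < k) (heven : Even (k * q + r)) :
    InP PType.C (balP q r k) := by
  refine ⟨balP_genuine hq, ?_⟩
  intro a ha
  have ha_odd : Odd a := ha
  rw [Nat.odd_iff] at ha_odd
  rw [Nat.even_iff] at heven
  have hmod : (k * q) % 2 = (k % 2) * (q % 2) % 2 := Nat.mul_mod _ _ _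
  rw [balP_count, Nat.even_iff]
  split_ifs with h1 h2 h2
  · omega
  · -- a = q + 1 odd, so q even
    have hq2 : q % 2 = 0 := by omega
    have hkq : (k * q) % 2 = 0 := by
      rw [Nat.mul_mod, hq2]
      simp
    omega
  · -- a = q odd
    have hq2 : q % 2 = 1 := by omega
    have hkq : (k * q) % 2 = k % 2 := by
      rw [Nat.mul_mod, hq2, Nat.mul_one]
      omega
    omega
  · omega

lemma balBD_witness {X : PType} (hX : X ≠ PType.C) (hq : 1 ≤ q) (hk : 1 ≤ k) (hrk : r < k) :
    ∃ v : Ptn, InP X v ∧ v.sum = (balP q r k).sum ∧ Dom v (balP q r k) ∧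
      Multiset.card v ≤ k + 1 := by
  have hgen := balP_genuine (q := q) (r := r) (k := k) hq
  by_cases hok : ∀ a : ℕ, Even a → Even (Multiset.count a (balP q r k))
  · refine ⟨balP q r k, ⟨hgen, fun a ha => hok a ((badPart_iff_notC hX a).1 ha)⟩,
      rfl, fun j => le_refl _, ?_⟩
    rw [balP_card]
    omega
  · push_neg at hok
    obtain ⟨a, ha_even, ha_odd⟩ := hok
    rw [Nat.even_iff] at ha_even
    have ha_odd' : Multiset.count a (balP q r k) % 2 = 1 := by
      rcases Nat.even_or_odd (Multiset.count a (balP q r k)) with h | h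
      · exact absurd h ha_odd
      · rw [Nat.odd_iff] at h; exact h
    have hcount := balP_count (q := q) (r := r) (k := k) a
    have hcpos : 0 < Multiset.count a (balP q r k) := by omega
    have hmem : a ∈ balP q r k := Multiset.count_pos.1 hcpos
    have ha2 : 2 ≤ a := by
      have := hgen a hmem
      omega
    have mk : MoveOK (balP q r k) a 0 := ⟨hmem, Or.inr rfl, by omega⟩
    refine ⟨mvP (balP q r k) a 0, ⟨mk.isPartition hgen, ?_⟩, mk.sum_eq hgen,
      mk.dom hgen, ?_⟩
    · -- counts of the split partition
      intro x hx
      have hx_even : Even x := (badPart_iff_notC hX x).1 hx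
      rw [Nat.even_iff] at hx_even
      unfold mvP
      rw [Multiset.count_cons, Multiset.count_cons]
      have h0mem : (0 : ℕ) ∉ (balP q r k).erase a := by
        intro hc
        have := hgen 0 (Multiset.mem_of_le (Multiset.erase_le a _) hc)
        omega
      rw [Multiset.erase_of_notMem h0mem]
      have hxa1 : x ≠ a - 1 := by
        intro hc
        omega
      have hx1 : x ≠ 1 := by
        intro hc
        omega
      rw [if_neg (by omega : ¬ (x = a - 1)), if_neg (by omega : ¬ (x = 1))]
      by_cases hxa : x = a
      · subst hxa
        rw [Multiset.count_erase_self, Nat.even_iff]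
        omega
      · rw [Multiset.count_erase_of_ne hxa]
        -- x even, x ≠ a : count in balP is 0 or the even one
        have hc := balP_count (q := q) (r := r) (k := k) x
        rw [Nat.even_iff]
        -- establish q-parity facts
        rcases Nat.even_or_odd q with hqp | hqp
        · -- q even: the bad value a must be q (q+1 is odd); so x ≠ q; x = q+1 impossible (odd)
          rw [Nat.even_iff] at hqp
          have haq : a = q := by
            have := hcount
            split_ifs at hcount with g1 g2 g2 <;> omega
          split_ifs at hc with g1 g2 g2 <;> omega
        · rw [Nat.odd_iff] at hqp
          have haq : a = q + 1 := by
            split_ifs at hcount with g1 g2 g2 <;> omega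
          split_ifs at hc with g1 g2 g2 <;> omega
    · unfold mvP
      have h0mem : (0 : ℕ) ∉ (balP q r k).erase a := by
        intro hc
        have := hgen 0 (Multiset.mem_of_le (Multiset.erase_le a _) hc)
        omega
      rw [Multiset.erase_of_notMem h0mem]
      simp [Multiset.card_erase_of_mem hmem, balP_card]
      have hcb : r + (k - r) = k := by omega
      have : 0 < Multiset.card (balP q r k) := by
        rw [balP_card]; omega
      rw [balP_card] at *
      omega

end Balanced

/-- Counting parts of collapses: (i) any collapse has `#λ` or `#λ + 1` parts;
(ii) partitions in `𝒫_B(n)` (n odd) have an odd number of parts and partitions in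
`𝒫_D(n)` (n even) an even number; (iii) for n even the C-collapse has exactly `#λ` parts. -/
theorem card_of_collapse (n : ℕ) (lam : Ptn)
    (hpart : IsPartition lam) (hne : lam ≠ 0) (hsum : lam.sum = n) :
    (∀ X : PType, CollapseDefined X lam →
        Multiset.card (collapse X lam) = Multiset.card lam ∨
        Multiset.card (collapse X lam) = Multiset.card lam + 1) ∧
    (Odd n → ∀ mu : Ptn, InP PType.B mu → mu.sum = n → Odd (Multiset.card mu)) ∧
    (Even n → ∀ mu : Ptn, InP PType.D mu → mu.sum = n → Even (Multiset.card mu)) ∧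
    (Even n → CollapseDefined PType.C lam ∧
        Multiset.card (collapse PType.C lam) = Multiset.card lam) := by
  subst hsum
  set k := Multiset.card lam with hk_def
  have hk1 : 1 ≤ k := Multiset.card_pos.2 hne
  have hkn : k ≤ lam.sum := card_le_sum hpart
  set q := lam.sum / k with hq_def
  set r := lam.sum % k with hr_def
  have hrk : r < k := Nat.mod_lt _ (by omega)
  have hqr : k * q + r = lam.sum := Nat.div_add_mod _ _
  have hq1 : 1 ≤ q := (Nat.one_le_div_iff (by omega)).2 hkn
  have hbal_sum : (balP q r k).sum = lam.sum := by
    rw [balP_sum (le_of_lt hrk)]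
    omega
  have hbal_dom : Dom (balP q r k) lam :=
    balP_dom hpart hq1 (by omega) hrk hk_def.symm hqr.symm
  have hbal_card : Multiset.card (balP q r k) = k := by
    rw [balP_card]
    omega
  refine ⟨?_, ?_, ?_, ?_⟩
  · -- part (i)
    intro X hX
    have hcol := collapse_eq_of_defined hX
    have hlow := isCollapse_card_lower hpart hcol
    by_cases hXC : X = PType.C
    · subst hXC
      have heven : Even lam.sum := by
        obtain ⟨m, hm⟩ := hX
        have h := inP_C_sum_even hm.1
        rw [hm.2.1] at h
        exact h
      have hup := isCollapse_card_upper hcol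
        (balP_inP_C hq1 hrk (by rw [hqr]; exact heven)) hbal_sum hbal_dom
      rw [hbal_card] at hup
      left
      omega
    · obtain ⟨v, hvP, hvsum, hvdom, hvcard⟩ := balBD_witness hXC hq1 (by omega) hrk
      have hup := isCollapse_card_upper hcol hvP (by rw [hvsum, hbal_sum])
        (fun j => le_trans (hvdom j) (hbal_dom j))
      omega
  · -- part (ii) for B
    intro hodd mu hmu hmusum
    have hp := inP_BD_parity (by intro h; exact PType.noConfusion h) hmu
    rw [hmusum] at hp
    rw [Nat.even_iff] at hp
    rw [Nat.odd_iff] at hodd ⊢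
    omega
  · -- part (ii) for D
    intro hev mu hmu hmusum
    have hp := inP_BD_parity (by intro h; exact PType.noConfusion h) hmu
    rw [hmusum] at hp
    rw [Nat.even_iff] at hp hev ⊢
    omega
  · -- part (iii)
    intro heven
    have hCD : CollapseDefined PType.C lam := collapseDefined_of hpart (fun _ => heven)
    have hcol := collapse_eq_of_defined hCD
    have hlow := isCollapse_card_lower hpart hcol
    have hup := isCollapse_card_upper hcol
      (balP_inP_C hq1 hrk (by rw [hqr]; exact heven)) hbal_sum hbal_dom
    rw [hbal_card] at hup
    exact ⟨hCD, by omega⟩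

end NilDual
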